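/- For all integers m, n ≥ 2, every proper 3-coloring of the grid P_m □ P_n fails to be a locating coloring; equivalently, χ_L(P_m □ P_n) ≥ 4. -/

import Mathlib

open SimpleGraph

/-- The distance from a vertex to a set of vertices. -/
noncomputable def setDist {V : Type*} (G : SimpleGraph V) (v : V) (S : Set V) : ℕ :=
  sInf (G.dist v '' S)

/-- The color code of a vertex with respect to a `k`-coloring `c`:
the tuple of distances to the color classes. -/
noncomputable def colorCode {V : Type*} (G : SimpleGraph V) {k : ℕ} (c : V → Fin k)
    (v : V) : Fin k → ℕ :=
  fun i => setDist G v (c ⁻¹' {i})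

/-- `c` is a locating `k`-coloring of `G`: a proper coloring onto the `k` colors
such that distinct vertices have distinct color codes. -/
def IsLocatingColoring {V : Type*} (G : SimpleGraph V) {k : ℕ} (c : V → Fin k) : Prop :=
  Function.Surjective c ∧
  (∀ u v : V, G.Adj u v → c u ≠ c v) ∧
  Function.Injective (colorCode G c)

/-- The locating chromatic number: the least `k` admitting a locating `k`-coloring. -/
noncomputable def locatingChromaticNumber {V : Type*} (G : SimpleGraph V) : ℕ :=
  sInf {k : ℕ | ∃ c : V → Fin k, IsLocatingColoring G c}

/-- A vertex is colorful w.r.t. a coloring `c` if every color appears in its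
closed neighborhood. -/
def IsColorful {V : Type*} (G : SimpleGraph V) {k : ℕ} (c : V → Fin k) (v : V) : Prop :=
  ∀ i : Fin k, ∃ u : V, (u = v ∨ G.Adj v u) ∧ c u = i

lemma code_of_colorful {V : Type*} {G : SimpleGraph V} (hconn : G.Connected)
    {k : ℕ} {c : V → Fin k} {v : V} (hv : IsColorful G c v) :
    colorCode G c v = fun i => if i = c v then 0 else 1 := by
  funext i
  simp only [colorCode, setDist]
  by_cases h : i = c v
  · rw [if_pos h]
    exact Nat.sInf_eq_zero.mpr (Or.inl ⟨v, by simp [h], G.dist_self⟩)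
  · rw [if_neg h]
    obtain ⟨u, hu, hcu⟩ := hv i
    have hne : u ≠ v := fun he => h (by rw [← hcu, he])
    have hadj : G.Adj v u := by
      rcases hu with h' | h'
      · exact absurd h' hne
      · exact h'
    have h1 : (1 : ℕ) ∈ G.dist v '' (c ⁻¹' {i}) :=
      ⟨u, by simp [hcu], (G.dist_eq_one_iff_adj).mpr hadj⟩
    refine le_antisymm (Nat.sInf_le h1) (le_csInf ⟨1, h1⟩ ?_)
    rintro x ⟨a, ha, rfl⟩
    have hav : v ≠ a := fun he => h (by simp only [Set.mem_preimage, Set.mem_singleton_iff] at ha; rw [← ha, he])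
    exact hconn.pos_dist_of_ne hav

lemma no_two_colorful {V : Type*} {G : SimpleGraph V} (hconn : G.Connected)
    {k : ℕ} {c : V → Fin k} (hinj : Function.Injective (colorCode G c))
    {u v : V} (hu : IsColorful G c u) (hv : IsColorful G c v) (hc : c u = c v) : u = v := by
  apply hinj
  rw [code_of_colorful hconn hu, code_of_colorful hconn hv, hc]

lemma colorful_of_adj3 {V : Type*} {G : SimpleGraph V} {c : V → Fin 3} {v u1 u2 : V}
    (h1 : G.Adj v u1) (h2 : G.Adj v u2) (hd1 : c u1 ≠ c v) (hd2 : c u2 ≠ c v)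
    (hd12 : c u1 ≠ c u2) : IsColorful G c v := by
  intro i
  have key : ∀ x a b i : Fin 3, a ≠ x → b ≠ x → a ≠ b → (i = x ∨ i = a ∨ i = b) := by decide
  rcases key (c v) (c u1) (c u2) i hd1 hd2 hd12 with h | h | h
  · exact ⟨v, Or.inl rfl, h.symm⟩
  · exact ⟨u1, Or.inr h1, h.symm⟩
  · exact ⟨u2, Or.inr h2, h.symm⟩

lemma colorful_of_adj2 {V : Type*} {G : SimpleGraph V} {c : V → Fin 2} {v u1 : V}
    (h1 : G.Adj v u1) (hd : c u1 ≠ c v) : IsColorful G c v := by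
  intro i
  have key : ∀ a b i : Fin 2, b ≠ a → (i = a ∨ i = b) := by decide
  rcases key (c v) (c u1) i hd with h | h
  · exact ⟨v, Or.inl rfl, h.symm⟩
  · exact ⟨u1, Or.inr h1, h.symm⟩

lemma code_zero_iff {V : Type*} {G : SimpleGraph V} (hconn : G.Connected)
    {k : ℕ} {c : V → Fin k} (hsurj : Function.Surjective c) (v : V) (i : Fin k) :
    colorCode G c v i = 0 ↔ c v = i := by
  simp only [colorCode, setDist]
  constructor
  · intro h
    rcases Nat.sInf_eq_zero.mp h with h0 | hemp
    · obtain ⟨x, hx, hdx⟩ := h0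
      have hvx : v = x := (hconn.dist_eq_zero_iff).mp hdx
      simp only [Set.mem_preimage, Set.mem_singleton_iff] at hx
      rw [hvx]; exact hx
    · exfalso
      obtain ⟨x, hx⟩ := hsurj i
      exact Set.eq_empty_iff_forall_notMem.mp hemp (G.dist v x) ⟨x, by simp [hx], rfl⟩
  · intro h
    exact Nat.sInf_eq_zero.mpr (Or.inl ⟨v, by simp [h], G.dist_self⟩)

/-- For `m, n ≥ 2`, every proper `3`-coloring of `P_m □ P_n` fails to
be a locating coloring; equivalently `χ_L(P_m □ P_n) ≥ 4`. -/
theorem stmt4 (m n : ℕ) (hm : 2 ≤ m) (hn : 2 ≤ n) :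
    (∀ c : Fin m × Fin n → Fin 3,
      (∀ u v, (pathGraph m □ pathGraph n).Adj u v → c u ≠ c v) →
      ¬ IsLocatingColoring (pathGraph m □ pathGraph n) c) ∧
    4 ≤ locatingChromaticNumber (pathGraph m □ pathGraph n) := by
  have hconn : (pathGraph m □ pathGraph n).Connected := by
    rw [connected_boxProd]
    constructor
    · rw [show m = m - 1 + 1 by omega]; exact pathGraph_connected _
    · rw [show n = n - 1 + 1 by omega]; exact pathGraph_connected _
  -- basic adjacency facts
  have padj : ∀ (N a b : ℕ) (ha : a < N) (hb : b < N), b = a + 1 →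
      (pathGraph N).Adj ⟨a, ha⟩ ⟨b, hb⟩ := by
    intro N a b ha hb h
    exact pathGraph_adj.mpr (Or.inl h.symm)
  have hadjL : ∀ (a b : ℕ) (ha : a < m) (hb : b < m) (d : ℕ) (hd : d < n), b = a + 1 →
      (pathGraph m □ pathGraph n).Adj (⟨a, ha⟩, ⟨d, hd⟩) (⟨b, hb⟩, ⟨d, hd⟩) := by
    intro a b ha hb d hd h
    exact SimpleGraph.boxProd_adj.mpr (Or.inl ⟨padj m a b ha hb h, rfl⟩)
  have hadjR : ∀ (a : ℕ) (ha : a < m) (d e : ℕ) (hd : d < n) (he : e < n), e = d + 1 →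
      (pathGraph m □ pathGraph n).Adj (⟨a, ha⟩, ⟨d, hd⟩) (⟨a, ha⟩, ⟨e, he⟩) := by
    intro a ha d e hd he h
    exact SimpleGraph.boxProd_adj.mpr (Or.inr ⟨padj n d e hd he h, rfl⟩)
  have key3 : ∀ c : Fin m × Fin n → Fin 3,
      ¬ IsLocatingColoring (pathGraph m □ pathGraph n) c := by
    intro c hloc
    obtain ⟨hsurj, hprop, hinj⟩ := hloc
    -- every unit square is colored checkerboard-style
    have square : ∀ (a b d e : ℕ) (ha : a < m) (hb : b < m) (hd : d < n) (he : e < n),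
        b = a + 1 → e = d + 1 →
        c (⟨b, hb⟩, ⟨d, hd⟩) = c (⟨a, ha⟩, ⟨e, he⟩) ∧
        c (⟨a, ha⟩, ⟨d, hd⟩) = c (⟨b, hb⟩, ⟨e, he⟩) := by
      intro a b d e ha hb hd he hab hde
      set P : Fin m × Fin n := (⟨a, ha⟩, ⟨d, hd⟩) with hP
      set Q : Fin m × Fin n := (⟨b, hb⟩, ⟨d, hd⟩) with hQ
      set R : Fin m × Fin n := (⟨a, ha⟩, ⟨e, he⟩) with hR
      set S : Fin m × Fin n := (⟨b, hb⟩, ⟨e, he⟩) with hS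
      have hPQ : (pathGraph m □ pathGraph n).Adj P Q := hadjL a b ha hb d hd hab
      have hPR : (pathGraph m □ pathGraph n).Adj P R := hadjR a ha d e hd he hde
      have hQS : (pathGraph m □ pathGraph n).Adj Q S := hadjR b hb d e hd he hde
      have hRS : (pathGraph m □ pathGraph n).Adj R S := hadjL a b ha hb e he hab
      have hxy : c P ≠ c Q := hprop _ _ hPQ
      have hxz : c P ≠ c R := hprop _ _ hPR
      have hyw : c Q ≠ c S := hprop _ _ hQS
      have hzw : c R ≠ c S := hprop _ _ hRS
      by_cases hyz : c Q = c R
      · refine ⟨hyz, ?_⟩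
        by_cases hwx : c P = c S
        · exact hwx
        · exfalso
          have hQcol : IsColorful (pathGraph m □ pathGraph n) c Q :=
            colorful_of_adj3 hPQ.symm hQS hxy (Ne.symm hyw) hwx
          have hRcol : IsColorful (pathGraph m □ pathGraph n) c R :=
            colorful_of_adj3 hPR.symm hRS hxz (Ne.symm hzw) hwx
          have := no_two_colorful hconn hinj hQcol hRcol hyz
          rw [hQ, hR] at this
          simp only [Prod.mk.injEq, Fin.mk.injEq] at this
          omega
      · exfalso
        have hwx : c S = c P := by
          have key : ∀ x y z w : Fin 3, x ≠ y → x ≠ z → y ≠ w → z ≠ w → y ≠ z → w = x := by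
            intro x y z w
            fin_cases x <;> fin_cases y <;> fin_cases z <;> fin_cases w <;> decide
          exact key (c P) (c Q) (c R) (c S) hxy hxz hyw hzw hyz
        have hPcol : IsColorful (pathGraph m □ pathGraph n) c P :=
          colorful_of_adj3 hPQ hPR (Ne.symm hxy) (Ne.symm hxz) hyz
        have hScol : IsColorful (pathGraph m □ pathGraph n) c S :=
          colorful_of_adj3 hQS.symm hRS.symm hyw hzw hyz
        have := no_two_colorful hconn hinj hPcol hScol hwx.symm
        rw [hP, hS] at this
        simp only [Prod.mk.injEq, Fin.mk.injEq] at this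
        omega
    -- the coloring is forced to be a 2-coloring by parity
    have h0m : 0 < m := by omega
    have h1m : 1 < m := by omega
    have h0n : 0 < n := by omega
    have h1n : 1 < n := by omega
    set A := c (⟨0, h0m⟩, ⟨0, h0n⟩) with hA
    set B := c (⟨1, h1m⟩, ⟨0, h0n⟩) with hB
    have col0 : ∀ i, ∀ (hi : i < m),
        c (⟨i, hi⟩, ⟨0, h0n⟩) = if i % 2 = 0 then A else B := by
      intro i
      induction i using Nat.strong_induction_on with
      | _ i ih =>
        match i, ih with
        | 0, _ =>
          intro hi
          rw [if_pos (by norm_num)]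
        | 1, _ =>
          intro hi
          rw [if_neg (by norm_num)]
        | (k+2), ih =>
          intro hi
          have h1 := (square k (k+1) 0 1 (by omega) (by omega) h0n h1n rfl rfl).2
          have h2 := (square (k+1) (k+2) 0 1 (by omega) hi h0n h1n rfl rfl).1
          have h3 := ih k (by omega) (by omega)
          rw [h2, ← h1, h3, show (k+2) % 2 = k % 2 by omega]
    have col : ∀ j (hj : j < n) i (hi : i < m),
        c (⟨i, hi⟩, ⟨j, hj⟩) = if (i + j) % 2 = 0 then A else B := by
      intro j
      induction j with
      | zero =>
        intro hj i hi
        rw [col0 i hi, show i + 0 = i by omega]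
      | succ j ihj =>
        intro hj i hi
        rcases Nat.lt_or_ge (i + 1) m with h | h
        · have hs := (square i (i+1) j (j+1) (by omega) h (by omega) hj rfl rfl).1
          rw [← hs, ihj (by omega) (i+1) h, show (i+1+j) % 2 = (i+(j+1)) % 2 by omega]
        · have hi1 : 1 ≤ i := by omega
          have hs := (square (i-1) i j (j+1) (by omega) hi (by omega) hj (by omega) rfl).2
          rw [← hs, ihj (by omega) (i-1) (by omega),
            show (i-1+j) % 2 = (i+(j+1)) % 2 by omega]
    obtain ⟨t, htA, htB⟩ : ∃ t : Fin 3, t ≠ A ∧ t ≠ B := by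
      have key : ∀ a b : Fin 3, ∃ t, t ≠ a ∧ t ≠ b := by decide
      exact key A B
    obtain ⟨⟨⟨i, hi⟩, ⟨j, hj⟩⟩, hv⟩ := hsurj t
    rw [col j hj i hi] at hv
    by_cases hp : (i + j) % 2 = 0
    · rw [if_pos hp] at hv; exact htA hv.symm
    · rw [if_neg hp] at hv; exact htB hv.symm
  refine ⟨fun c _ => key3 c, ?_⟩
  refine le_csInf ⟨m * n, ?_⟩ ?_
  · -- a locating coloring with m*n colors exists
    refine ⟨⇑finProdFinEquiv, finProdFinEquiv.surjective, ?_, ?_⟩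
    · intro u v huv
      exact fun h => huv.ne (finProdFinEquiv.injective h)
    · intro u v h
      have h0 : colorCode (pathGraph m □ pathGraph n) (⇑finProdFinEquiv) v (finProdFinEquiv u) = 0 := by
        rw [← h]
        exact (code_zero_iff hconn finProdFinEquiv.surjective u _).mpr rfl
      exact (finProdFinEquiv.injective
        ((code_zero_iff hconn finProdFinEquiv.surjective v _).mp h0)).symm
  · intro k hk
    by_contra hlt
    push_neg at hlt
    obtain ⟨c, hsurj, hprop, hinj⟩ := hk
    interval_cases k
    · exact (c (⟨0, by omega⟩, ⟨0, by omega⟩)).elim0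
    · exact hprop (⟨0, by omega⟩, ⟨0, by omega⟩) (⟨1, by omega⟩, ⟨0, by omega⟩)
        (hadjL 0 1 (by omega) (by omega) 0 (by omega) rfl) (Subsingleton.elim _ _)
    · -- k = 2
      have h0m : 0 < m := by omega
      have h1m : 1 < m := by omega
      have h0n : 0 < n := by omega
      have h1n : 1 < n := by omega
      have hadj1 := hadjL 0 1 h0m h1m 0 h0n rfl
      have hadj2 := hadjR 1 h1m 0 1 h0n h1n rfl
      have hd1 : c (⟨1, h1m⟩, ⟨0, h0n⟩) ≠ c (⟨0, h0m⟩, ⟨0, h0n⟩) :=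
        Ne.symm (hprop _ _ hadj1)
      have hd2 : c (⟨1, h1m⟩, ⟨0, h0n⟩) ≠ c (⟨1, h1m⟩, ⟨1, h1n⟩) :=
        hprop _ _ hadj2
      have hucol : IsColorful (pathGraph m □ pathGraph n) c (⟨0, h0m⟩, ⟨0, h0n⟩) :=
        colorful_of_adj2 hadj1 hd1
      have hwcol : IsColorful (pathGraph m □ pathGraph n) c (⟨1, h1m⟩, ⟨1, h1n⟩) :=
        colorful_of_adj2 hadj2.symm hd2
      have hcc : c (⟨0, h0m⟩, ⟨0, h0n⟩) = c (⟨1, h1m⟩, ⟨1, h1n⟩) := by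
        have key : ∀ a b d : Fin 2, b ≠ a → b ≠ d → a = d := by decide
        exact key _ _ _ hd1 hd2
      have := no_two_colorful hconn hinj hucol hwcol hcc
      simp only [Prod.mk.injEq, Fin.mk.injEq] at this
      omega
    · exact key3 c ⟨hsurj, hprop, hinj⟩
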